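/- Cramér lower bound via tilting: let ξ be a real random variable with everywhere finite cumulant generating function Λ(λ) = log E[e^{λξ}] and whose support is all of ℝ. For x ∈ ℝ, let λ_x satisfy Λ'(λ_x) = x and set I(x) = xλ_x - Λ(λ_x). Then for S_n the sum of n iid copies of ξ, lim_{δ→0} liminf_{n→∞} (1/n) log P(S_n/n ∈ (x-δ, x+δ)) = -I(x). -/

import Mathlib

open MeasureTheory ProbabilityTheory Filter Topology



-- pointwise bounds
lemma bnd1 (lx y : ℝ) {l : ℝ} (hl : |l - lx| < 1) :
    |Real.exp (l*y) * y| ≤ Real.exp ((lx+2)*y) + Real.exp ((lx-2)*y) := by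
  have h1 : ∀ t : ℝ, t ≤ Real.exp t := fun t => le_trans (by linarith) (Real.add_one_le_exp t)
  rw [abs_mul, abs_of_pos (Real.exp_pos _)]
  rcases le_or_gt 0 y with hy | hy
  · have : Real.exp (l*y) * |y| ≤ Real.exp ((lx+2)*y) := by
      rw [abs_of_nonneg hy]
      calc Real.exp (l*y) * y ≤ Real.exp (l*y) * Real.exp y :=
            mul_le_mul_of_nonneg_left (le_trans (h1 y) (le_refl _)) (Real.exp_pos _).le
        _ = Real.exp ((l+1)*y) := by rw [← Real.exp_add]; ring_nf
        _ ≤ Real.exp ((lx+2)*y) := by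
            apply Real.exp_le_exp.2
            have : l + 1 ≤ lx + 2 := by cases abs_lt.1 hl; linarith
            exact mul_le_mul_of_nonneg_right this hy
    linarith [Real.exp_pos ((lx-2)*y)]
  · have : Real.exp (l*y) * |y| ≤ Real.exp ((lx-2)*y) := by
      rw [abs_of_neg hy]
      calc Real.exp (l*y) * (-y) ≤ Real.exp (l*y) * Real.exp (-y) :=
            mul_le_mul_of_nonneg_left (h1 (-y)) (Real.exp_pos _).le
        _ = Real.exp ((l-1)*y) := by rw [← Real.exp_add]; ring_nf
        _ ≤ Real.exp ((lx-2)*y) := by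
            apply Real.exp_le_exp.2
            have h2 : lx - 2 ≤ l - 1 := by cases abs_lt.1 hl; linarith
            nlinarith
    linarith [Real.exp_pos ((lx+2)*y)]

lemma bnd2 (x l y : ℝ) : (y - x)^2 * Real.exp (l*y) ≤
    2*Real.exp ((l+2)*y) + 2*Real.exp ((l-2)*y) + 2*x^2*Real.exp (l*y) := by
  have h1 : ∀ t : ℝ, t ≤ Real.exp t := fun t => le_trans (by linarith) (Real.add_one_le_exp t)
  have hy2 : y^2 ≤ Real.exp (2*y) + Real.exp (-(2*y)) := by
    rcases le_or_gt 0 y with hy | hy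
    · have h2 := h1 y
      have e1 : Real.exp (2*y) = Real.exp y * Real.exp y := by rw [two_mul, Real.exp_add]
      nlinarith [Real.exp_pos (-(2*y)), Real.exp_pos y]
    · have h2 := h1 (-y)
      have e1 : Real.exp (-(2*y)) = Real.exp (-y) * Real.exp (-y) := by
        rw [show -(2*y) = -y + -y by ring, Real.exp_add]
      nlinarith [Real.exp_pos (2*y), Real.exp_pos (-y)]
  have hyx : (y - x)^2 ≤ 2*y^2 + 2*x^2 := by nlinarith [sq_nonneg (y + x)]
  have hexp : (0:ℝ) < Real.exp (l*y) := Real.exp_pos _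
  calc (y - x)^2 * Real.exp (l*y) ≤ (2*y^2 + 2*x^2) * Real.exp (l*y) :=
        mul_le_mul_of_nonneg_right hyx hexp.le
    _ ≤ (2*(Real.exp (2*y) + Real.exp (-(2*y))) + 2*x^2) * Real.exp (l*y) := by
        apply mul_le_mul_of_nonneg_right _ hexp.le; nlinarith
    _ = 2*Real.exp ((l+2)*y) + 2*Real.exp ((l-2)*y) + 2*x^2*Real.exp (l*y) := by
        have e1 : Real.exp ((l+2)*y) = Real.exp (2*y) * Real.exp (l*y) := by
          rw [← Real.exp_add]; ring_nf
        have e2 : Real.exp ((l-2)*y) = Real.exp (-(2*y)) * Real.exp (l*y) := by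
          rw [← Real.exp_add]; ring_nf
        rw [e1, e2]; ring

lemma bnd3 (x l y : ℝ) : |(y - x) * Real.exp (l*y)| ≤
    Real.exp ((l+1)*y) + Real.exp ((l-1)*y) + |x| * Real.exp (l*y) := by
  have h1 : ∀ t : ℝ, t ≤ Real.exp t := fun t => le_trans (by linarith) (Real.add_one_le_exp t)
  have habs : |y| ≤ Real.exp y + Real.exp (-y) := by
    rcases le_or_gt 0 y with hy | hy
    · rw [abs_of_nonneg hy]; linarith [h1 y, Real.exp_pos (-y)]
    · rw [abs_of_neg hy]; linarith [h1 (-y), Real.exp_pos y]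
  have hexp : (0:ℝ) < Real.exp (l*y) := Real.exp_pos _
  rw [abs_mul, abs_of_pos hexp]
  calc |y - x| * Real.exp (l*y) ≤ (|y| + |x|) * Real.exp (l*y) :=
        mul_le_mul_of_nonneg_right (abs_sub _ _) hexp.le
    _ ≤ (Real.exp y + Real.exp (-y) + |x|) * Real.exp (l*y) :=
        mul_le_mul_of_nonneg_right (by linarith) hexp.le
    _ = Real.exp ((l+1)*y) + Real.exp ((l-1)*y) + |x| * Real.exp (l*y) := by
        have e1 : Real.exp ((l+1)*y) = Real.exp y * Real.exp (l*y) := by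
          rw [← Real.exp_add]; ring_nf
        have e2 : Real.exp ((l-1)*y) = Real.exp (-y) * Real.exp (l*y) := by
          rw [← Real.exp_add]; ring_nf
        rw [e1, e2]; ring

lemma deriv_step {Ω : Type*} [MeasurableSpace Ω] (P : Measure Ω) [IsProbabilityMeasure P]
    (ξ : Ω → ℝ) (hξ : Measurable ξ)
    (hint : ∀ l : ℝ, Integrable (fun ω => Real.exp (l * ξ ω)) P)
    (x lx : ℝ)
    (hlx : HasDerivAt (fun l : ℝ => Real.log (∫ ω, Real.exp (l * ξ ω) ∂P)) x lx) :
    (∫ ω, Real.exp (lx * ξ ω) * ξ ω ∂P) = x * ∫ ω, Real.exp (lx * ξ ω) ∂P := by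
  have hMpos : 0 < ∫ ω, Real.exp (lx * ξ ω) ∂P := by
    simpa [mgf] using mgf_pos (X := ξ) (μ := P) (t := lx) (hint lx)
  have key : HasDerivAt (fun l : ℝ => ∫ ω, Real.exp (l * ξ ω) ∂P)
      (∫ ω, Real.exp (lx * ξ ω) * ξ ω ∂P) lx := by
    have := hasDerivAt_integral_of_dominated_loc_of_deriv_le (μ := P)
      (F := fun l ω => Real.exp (l * ξ ω)) (F' := fun l ω => Real.exp (l * ξ ω) * ξ ω)
      (x₀ := lx) (s := Metric.ball lx 1)
      (bound := fun ω => Real.exp ((lx+2) * ξ ω) + Real.exp ((lx-2) * ξ ω))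
      (Metric.ball_mem_nhds lx one_pos)
      (Eventually.of_forall fun l => ((hξ.const_mul l).exp).aestronglyMeasurable)
      (hint lx)
      (((hξ.const_mul lx).exp.mul hξ).aestronglyMeasurable)
      (Eventually.of_forall fun ω l hl => by
        rw [Real.norm_eq_abs]
        exact bnd1 lx (ξ ω) (by simpa [Real.dist_eq] using hl))
      ((hint (lx+2)).add (hint (lx-2)))
      (Eventually.of_forall fun ω l _ => by
        simpa [mul_comm] using ((hasDerivAt_id l).mul_const (ξ ω)).exp)
    exact this.2
  have h2 : HasDerivAt (fun l : ℝ => Real.log (∫ ω, Real.exp (l * ξ ω) ∂P))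
      ((∫ ω, Real.exp (lx * ξ ω) * ξ ω ∂P) / (∫ ω, Real.exp (lx * ξ ω) ∂P)) lx :=
    key.log hMpos.ne'
  have := hlx.unique h2
  rw [eq_div_iff hMpos.ne'] at this
  linarith

lemma indep_helper {Ω : Type*} [MeasurableSpace Ω] {P : Measure Ω}
    {X : ℕ → Ω → ℝ} (hX : ∀ i, Measurable (X i))
    (hindep : iIndepFun X P) (n : ℕ)
    (f : ((i : ↥(Finset.range n)) → ℝ) → ℝ) (hf : Measurable f)
    (ψ : ℝ → ℝ) (hψ : Measurable ψ) :
    IndepFun (fun ω => f (fun i => X i ω)) (fun ω => ψ (X n ω)) P := by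
  have h := hindep.indepFun_finset (Finset.range n) {n} (by simp) hX
  have := h.comp hf (hψ.comp (measurable_pi_apply (⟨n, by simp⟩ : ↥({n} : Finset ℕ))))
  exact this

lemma tilt_moments {Ω : Type*} [MeasurableSpace Ω] (P : Measure Ω) [IsProbabilityMeasure P]
    (X : ℕ → Ω → ℝ) (hX : ∀ i, Measurable (X i))
    (hindep : iIndepFun X P)
    (x lx M σ : ℝ)
    (hgi : ∀ i, Integrable (fun ω => Real.exp (lx * X i ω)) P)
    (hhi : ∀ i, Integrable (fun ω => (X i ω - x) * Real.exp (lx * X i ω)) P)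
    (hqi : ∀ i, Integrable (fun ω => (X i ω - x)^2 * Real.exp (lx * X i ω)) P)
    (hgM : ∀ i, ∫ ω, Real.exp (lx * X i ω) ∂P = M)
    (hh0 : ∀ i, ∫ ω, (X i ω - x) * Real.exp (lx * X i ω) ∂P = 0)
    (hqσ : ∀ i, ∫ ω, (X i ω - x)^2 * Real.exp (lx * X i ω) ∂P = σ)
    (hM : 0 < M) :
    ∀ n : ℕ,
    Integrable (fun ω => ∏ i ∈ Finset.range n, Real.exp (lx * X i ω)) P ∧
    Integrable (fun ω => (∑ i ∈ Finset.range n, (X i ω - x)) *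
      ∏ i ∈ Finset.range n, Real.exp (lx * X i ω)) P ∧
    Integrable (fun ω => (∑ i ∈ Finset.range n, (X i ω - x))^2 *
      ∏ i ∈ Finset.range n, Real.exp (lx * X i ω)) P ∧
    (∫ ω, ∏ i ∈ Finset.range n, Real.exp (lx * X i ω) ∂P = M ^ n) ∧
    (∫ ω, (∑ i ∈ Finset.range n, (X i ω - x)) *
      ∏ i ∈ Finset.range n, Real.exp (lx * X i ω) ∂P = 0) ∧
    (∫ ω, (∑ i ∈ Finset.range n, (X i ω - x))^2 *
      ∏ i ∈ Finset.range n, Real.exp (lx * X i ω) ∂P = n * σ * M ^ n / M) := by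
  intro n
  induction n with
  | zero => simp
  | succ n ih =>
    obtain ⟨iG, iWG, iW2G, eG, eWG, eW2G⟩ := ih
    set Gn : Ω → ℝ := fun ω => ∏ i ∈ Finset.range n, Real.exp (lx * X i ω) with hGn
    set Wn : Ω → ℝ := fun ω => ∑ i ∈ Finset.range n, (X i ω - x) with hWn
    -- representations as functions of the vector of coordinates in range n
    have repG : Gn = fun ω => (fun v : (↥(Finset.range n) → ℝ) =>
        ∏ i ∈ (Finset.range n).attach, Real.exp (lx * v i)) (fun i => X i ω) := by
      funext ω
      exact (Finset.prod_attach (Finset.range n) fun j => Real.exp (lx * X j ω)).symm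
    have repWG : (fun ω => Wn ω * Gn ω) = fun ω => (fun v : (↥(Finset.range n) → ℝ) =>
        (∑ i ∈ (Finset.range n).attach, (v i - x)) *
        ∏ i ∈ (Finset.range n).attach, Real.exp (lx * v i)) (fun i => X i ω) := by
      funext ω
      simp only [Finset.prod_attach (Finset.range n) fun j => Real.exp (lx * X j ω),
        Finset.sum_attach (Finset.range n) fun j => X j ω - x]
      rfl
    have repW2G : (fun ω => Wn ω ^ 2 * Gn ω) = fun ω => (fun v : (↥(Finset.range n) → ℝ) =>
        (∑ i ∈ (Finset.range n).attach, (v i - x))^2 *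
        ∏ i ∈ (Finset.range n).attach, Real.exp (lx * v i)) (fun i => X i ω) := by
      funext ω
      simp only [Finset.prod_attach (Finset.range n) fun j => Real.exp (lx * X j ω),
        Finset.sum_attach (Finset.range n) fun j => X j ω - x]
      rfl
    have mG : Measurable fun v : (↥(Finset.range n) → ℝ) =>
        ∏ i ∈ (Finset.range n).attach, Real.exp (lx * v i) :=
      Finset.measurable_prod _ fun i _ => by fun_prop
    have mW : Measurable fun v : (↥(Finset.range n) → ℝ) =>
        ∑ i ∈ (Finset.range n).attach, (v i - x) :=
      Finset.measurable_sum _ fun i _ => (measurable_pi_apply i).sub measurable_const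
    have mg : Measurable fun y : ℝ => Real.exp (lx * y) := (measurable_id.const_mul lx).exp
    have mh : Measurable fun y : ℝ => (y - x) * Real.exp (lx * y) :=
      (measurable_id.sub measurable_const).mul mg
    have mq : Measurable fun y : ℝ => (y - x)^2 * Real.exp (lx * y) :=
      ((measurable_id.sub measurable_const).pow_const 2).mul mg
    have I1 : IndepFun Gn (fun ω => Real.exp (lx * X n ω)) P := by
      rw [repG]; exact indep_helper hX hindep n _ mG _ mg
    have I5 : IndepFun (fun ω => Wn ω * Gn ω) (fun ω => Real.exp (lx * X n ω)) P := by
      rw [repWG]; exact indep_helper hX hindep n _ (mW.mul mG) _ mg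
    have I6 : IndepFun Gn (fun ω => (X n ω - x) * Real.exp (lx * X n ω)) P := by
      rw [repG]; exact indep_helper hX hindep n _ mG _ mh
    have I3 : IndepFun (fun ω => Wn ω ^ 2 * Gn ω) (fun ω => Real.exp (lx * X n ω)) P := by
      rw [repW2G]; exact indep_helper hX hindep n _ ((mW.pow_const 2).mul mG) _ mg
    have I2 : IndepFun (fun ω => Wn ω * Gn ω)
        (fun ω => (X n ω - x) * Real.exp (lx * X n ω)) P := by
      rw [repWG]; exact indep_helper hX hindep n _ (mW.mul mG) _ mh
    have I4 : IndepFun Gn (fun ω => (X n ω - x)^2 * Real.exp (lx * X n ω)) P := by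
      rw [repG]; exact indep_helper hX hindep n _ mG _ mq
    -- decompositions
    have dG : (fun ω => ∏ i ∈ Finset.range (n+1), Real.exp (lx * X i ω)) =
        fun ω => Gn ω * Real.exp (lx * X n ω) := by
      funext ω; rw [Finset.prod_range_succ]
    have dWG : (fun ω => (∑ i ∈ Finset.range (n+1), (X i ω - x)) *
        ∏ i ∈ Finset.range (n+1), Real.exp (lx * X i ω)) =
        fun ω => Wn ω * Gn ω * Real.exp (lx * X n ω) +
          Gn ω * ((X n ω - x) * Real.exp (lx * X n ω)) := by
      funext ω; rw [Finset.prod_range_succ, Finset.sum_range_succ]; ring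
    have dW2G : (fun ω => (∑ i ∈ Finset.range (n+1), (X i ω - x))^2 *
        ∏ i ∈ Finset.range (n+1), Real.exp (lx * X i ω)) =
        fun ω => Wn ω ^ 2 * Gn ω * Real.exp (lx * X n ω) +
          (2 * (Wn ω * Gn ω * ((X n ω - x) * Real.exp (lx * X n ω))) +
          Gn ω * ((X n ω - x)^2 * Real.exp (lx * X n ω))) := by
      funext ω; rw [Finset.prod_range_succ, Finset.sum_range_succ]; ring
    -- integrabilities of the pieces
    have j1 : Integrable (fun ω => Gn ω * Real.exp (lx * X n ω)) P := I1.integrable_mul iG (hgi n)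
    have j5 : Integrable (fun ω => Wn ω * Gn ω * Real.exp (lx * X n ω)) P :=
      I5.integrable_mul iWG (hgi n)
    have j6 : Integrable (fun ω => Gn ω * ((X n ω - x) * Real.exp (lx * X n ω))) P :=
      I6.integrable_mul iG (hhi n)
    have j3 : Integrable (fun ω => Wn ω ^ 2 * Gn ω * Real.exp (lx * X n ω)) P :=
      I3.integrable_mul iW2G (hgi n)
    have j2 : Integrable (fun ω => Wn ω * Gn ω * ((X n ω - x) * Real.exp (lx * X n ω))) P :=
      I2.integrable_mul iWG (hhi n)
    have j4 : Integrable (fun ω => Gn ω * ((X n ω - x)^2 * Real.exp (lx * X n ω))) P :=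
      I4.integrable_mul iG (hqi n)
    refine ⟨?_, ?_, ?_, ?_, ?_, ?_⟩
    · rw [dG]; exact j1
    · rw [dWG]; exact j5.add j6
    · rw [dW2G]; exact j3.add ((j2.const_mul 2).add j4)
    · rw [dG]
      have h1' : ∫ ω, Gn ω * Real.exp (lx * X n ω) ∂P =
          (∫ ω, Gn ω ∂P) * ∫ ω, Real.exp (lx * X n ω) ∂P :=
        I1.integral_fun_mul_eq_mul_integral iG.aestronglyMeasurable (hgi n).aestronglyMeasurable
      rw [h1', eG, hgM n, pow_succ]
    · rw [dWG, integral_add j5 j6]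
      have h5 : ∫ ω, Wn ω * Gn ω * Real.exp (lx * X n ω) ∂P =
          (∫ ω, Wn ω * Gn ω ∂P) * ∫ ω, Real.exp (lx * X n ω) ∂P :=
        I5.integral_fun_mul_eq_mul_integral iWG.aestronglyMeasurable (hgi n).aestronglyMeasurable
      have h6 : ∫ ω, Gn ω * ((X n ω - x) * Real.exp (lx * X n ω)) ∂P =
          (∫ ω, Gn ω ∂P) * ∫ ω, (X n ω - x) * Real.exp (lx * X n ω) ∂P :=
        I6.integral_fun_mul_eq_mul_integral iG.aestronglyMeasurable (hhi n).aestronglyMeasurable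
      rw [h5, h6, eWG, eG, hh0 n]
      ring
    · rw [dW2G]
      have e1 := integral_add j3 ((j2.const_mul 2).add j4)
      simp only [Pi.add_apply] at e1
      rw [e1, integral_add (j2.const_mul 2) j4, integral_const_mul 2 _]
      have h3 : ∫ ω, Wn ω ^ 2 * Gn ω * Real.exp (lx * X n ω) ∂P =
          (∫ ω, Wn ω ^ 2 * Gn ω ∂P) * ∫ ω, Real.exp (lx * X n ω) ∂P :=
        I3.integral_fun_mul_eq_mul_integral iW2G.aestronglyMeasurable (hgi n).aestronglyMeasurable
      have h2 : ∫ ω, Wn ω * Gn ω * ((X n ω - x) * Real.exp (lx * X n ω)) ∂P =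
          (∫ ω, Wn ω * Gn ω ∂P) * ∫ ω, (X n ω - x) * Real.exp (lx * X n ω) ∂P :=
        I2.integral_fun_mul_eq_mul_integral iWG.aestronglyMeasurable (hhi n).aestronglyMeasurable
      have h4 : ∫ ω, Gn ω * ((X n ω - x) ^ 2 * Real.exp (lx * X n ω)) ∂P =
          (∫ ω, Gn ω ∂P) * ∫ ω, (X n ω - x) ^ 2 * Real.exp (lx * X n ω) ∂P :=
        I4.integral_fun_mul_eq_mul_integral iG.aestronglyMeasurable (hqi n).aestronglyMeasurable
      rw [h3, h2, h4, eW2G, eWG, eG, hgM n, hh0 n, hqσ n]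
      push_cast
      field_simp
      ring


lemma bounds_lemma {Ω : Type*} [MeasurableSpace Ω] (P : Measure Ω) [IsProbabilityMeasure P]
    (X : ℕ → Ω → ℝ) (hX : ∀ i, Measurable (X i))
    (x lx M σ δ : ℝ) (hM : 0 < M) (hδ : 0 < δ) (hσ0 : 0 ≤ σ) (n : ℕ) (hn : 1 ≤ n)
    (iG : Integrable (fun ω => ∏ i ∈ Finset.range n, Real.exp (lx * X i ω)) P)
    (iW2G : Integrable (fun ω => (∑ i ∈ Finset.range n, (X i ω - x))^2 *
      ∏ i ∈ Finset.range n, Real.exp (lx * X i ω)) P)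
    (eG : ∫ ω, ∏ i ∈ Finset.range n, Real.exp (lx * X i ω) ∂P = M ^ n)
    (eW2G : ∫ ω, (∑ i ∈ Finset.range n, (X i ω - x))^2 *
      ∏ i ∈ Finset.range n, Real.exp (lx * X i ω) ∂P = n * σ * M ^ n / M) :
    (P {ω | (∑ i ∈ Finset.range n, X i ω) / n ∈ Set.Ioo (x - δ) (x + δ)}).toReal ≤
      Real.exp (-(n*(lx*x)) + n*(|lx| * δ)) * M^n ∧
    M^n * (1 - σ/(M*n*δ^2)) * Real.exp (-(n*(lx*x)) - n*(|lx| * δ)) ≤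
      (P {ω | (∑ i ∈ Finset.range n, X i ω) / n ∈ Set.Ioo (x - δ) (x + δ)}).toReal := by
  have hnpos : (0:ℝ) < n := by exact_mod_cast hn
  set S : Ω → ℝ := fun ω => ∑ i ∈ Finset.range n, X i ω with hS
  set G : Ω → ℝ := fun ω => ∏ i ∈ Finset.range n, Real.exp (lx * X i ω) with hG
  set A : Set Ω := {ω | S ω / n ∈ Set.Ioo (x - δ) (x + δ)} with hA
  have hSmeas : Measurable S := Finset.measurable_sum _ fun i _ => hX i
  have hAmeas : MeasurableSet A := (hSmeas.div_const _) measurableSet_Ioo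
  set pn : ℝ := (P A).toReal with hpn
  have hpn0 : 0 ≤ pn := ENNReal.toReal_nonneg
  have hGexp : ∀ ω, G ω = Real.exp (lx * S ω) := by
    intro ω
    rw [hG, hS]
    simp only [Finset.mul_sum, Real.exp_sum]
  have hGnn : ∀ ω, 0 ≤ G ω := fun ω => by rw [hGexp]; positivity
  have hW : ∀ ω, (∑ i ∈ Finset.range n, (X i ω - x)) = S ω - n * x := by
    intro ω
    rw [Finset.sum_sub_distrib, Finset.sum_const, Finset.card_range, nsmul_eq_mul, hS]
  -- bounds on G on A
  have habsA : ∀ ω ∈ A, |S ω - n * x| ≤ n * δ := by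
    intro ω hω
    obtain ⟨h1, h2⟩ := hω
    rw [abs_le]
    constructor
    · nlinarith [(div_lt_iff₀ hnpos).1 (show S ω / n < x + δ from h2),
        (lt_div_iff₀ hnpos).1 (show x - δ < S ω / n from h1)]
    · nlinarith [(div_lt_iff₀ hnpos).1 (show S ω / n < x + δ from h2)]
  have hGlow : ∀ ω ∈ A, Real.exp (n*(lx*x) - n*(|lx| * δ)) ≤ G ω := by
    intro ω hω
    rw [hGexp]
    apply Real.exp_le_exp.2
    have h1 := habsA ω hω
    have h2 : |lx * (S ω - n * x)| ≤ |lx| * (n * δ) := by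
      rw [abs_mul]
      exact mul_le_mul_of_nonneg_left h1 (abs_nonneg lx)
    have h3 := neg_abs_le (lx * (S ω - n * x))
    nlinarith [abs_nonneg lx]
  have hGhigh : ∀ ω ∈ A, G ω ≤ Real.exp (n*(lx*x) + n*(|lx| * δ)) := by
    intro ω hω
    rw [hGexp]
    apply Real.exp_le_exp.2
    have h1 := habsA ω hω
    have h2 : |lx * (S ω - n * x)| ≤ |lx| * (n * δ) := by
      rw [abs_mul]
      exact mul_le_mul_of_nonneg_left h1 (abs_nonneg lx)
    have h3 := le_abs_self (lx * (S ω - n * x))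
    nlinarith
  set T : ℝ := ∫ ω in A, G ω ∂P with hT
  have ub1 : T ≤ M ^ n := by
    rw [hT, ← eG]
    exact setIntegral_le_integral iG (Eventually.of_forall hGnn)
  have lb1 : Real.exp (n*(lx*x) - n*(|lx| * δ)) * pn ≤ T := by
    have := setIntegral_mono_on (f := fun _ => Real.exp (n*(lx*x) - n*(|lx| * δ))) (g := G)
      (integrableOn_const (measure_lt_top P A).ne) iG.integrableOn hAmeas hGlow
    rwa [setIntegral_const, smul_eq_mul, mul_comm] at this
  have ub2 : T ≤ Real.exp (n*(lx*x) + n*(|lx| * δ)) * pn := by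
    have := setIntegral_mono_on (f := G) (g := fun _ => Real.exp (n*(lx*x) + n*(|lx| * δ)))
      iG.integrableOn (integrableOn_const (measure_lt_top P A).ne) hAmeas hGhigh
    rwa [setIntegral_const, smul_eq_mul, mul_comm] at this
  -- complement bound
  have hW2Gnn : ∀ ω, 0 ≤ (∑ i ∈ Finset.range n, (X i ω - x))^2 * G ω :=
    fun ω => mul_nonneg (sq_nonneg _) (hGnn ω)
  have compl_bound : M ^ n - T ≤ σ * M ^ n / (M * n * δ^2) := by
    have hsplit : T + ∫ ω in Aᶜ, G ω ∂P = M ^ n := by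
      rw [hT, ← eG]; exact integral_add_compl hAmeas iG
    have hc : ∀ ω ∈ Aᶜ, G ω ≤ ((n*δ)^2)⁻¹ * ((∑ i ∈ Finset.range n, (X i ω - x))^2 * G ω) := by
      intro ω hω
      have hnotin : ¬ (S ω / n ∈ Set.Ioo (x - δ) (x + δ)) := hω
      have habs : n * δ ≤ |S ω - n * x| := by
        rcases le_or_gt (S ω / n) (x - δ) with h | h
        · have := (div_le_iff₀ hnpos).1 h
          rw [abs_sub_comm, abs_of_nonneg (by nlinarith)]
          nlinarith
        · have h2 : x + δ ≤ S ω / n := by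
            by_contra hcon
            exact hnotin ⟨h, lt_of_not_ge hcon⟩
          have := (le_div_iff₀ hnpos).1 h2
          rw [abs_of_nonneg (by nlinarith)]
          nlinarith
      have hsq : (n*δ)^2 ≤ (S ω - n * x)^2 := by
        rw [← sq_abs (S ω - n * x)]
        apply pow_le_pow_left₀ (by positivity) habs
      rw [hW ω]
      have hgnn := hGnn ω
      calc G ω = ((n*δ)^2)⁻¹ * ((n*δ)^2 * G ω) := by field_simp
        _ ≤ ((n*δ)^2)⁻¹ * ((S ω - n * x)^2 * G ω) := by
            apply mul_le_mul_of_nonneg_left _ (by positivity)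
            exact mul_le_mul_of_nonneg_right hsq hgnn
    have h1 : ∫ ω in Aᶜ, G ω ∂P ≤
        ∫ ω in Aᶜ, ((n*δ)^2)⁻¹ * ((∑ i ∈ Finset.range n, (X i ω - x))^2 * G ω) ∂P :=
      setIntegral_mono_on iG.integrableOn (iW2G.const_mul _).integrableOn hAmeas.compl hc
    have h2 : ∫ ω in Aᶜ, ((n*δ)^2)⁻¹ * ((∑ i ∈ Finset.range n, (X i ω - x))^2 * G ω) ∂P ≤
        ((n*δ)^2)⁻¹ * (n * σ * M ^ n / M) := by
      rw [← eW2G]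
      rw [integral_const_mul]
      apply mul_le_mul_of_nonneg_left _ (by positivity)
      exact setIntegral_le_integral iW2G (Eventually.of_forall hW2Gnn)
    have h3 : ((n*δ)^2)⁻¹ * (n * σ * M ^ n / M) = σ * M ^ n / (M * n * δ^2) := by
      field_simp
    linarith
  have hring : M^n * (1 - σ/(M*n*δ^2)) = M^n - σ * M^n / (M*n*δ^2) := by
    field_simp
  constructor
  · -- upper bound on pn
    have h := le_trans lb1 ub1
    have hepos : (0:ℝ) < Real.exp (n*(lx*x) - n*(|lx| * δ)) := Real.exp_pos _
    rw [show -(n*(lx*x)) + n*(|lx| * δ) = -(n*(lx*x) - n*(|lx| * δ)) by ring, Real.exp_neg,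
      inv_mul_eq_div, le_div_iff₀ hepos, mul_comm]
    exact h
  · -- lower bound on pn
    have h : M^n * (1 - σ/(M*n*δ^2)) ≤ T := by
      rw [hring]
      have : σ * M ^ n / (M * n * δ ^ 2) = σ * M ^ n / (M * ↑n * δ ^ 2) := rfl
      linarith [compl_bound]
    have h2 := le_trans h ub2
    have hepos : (0:ℝ) < Real.exp (n*(lx*x) + n*(|lx| * δ)) := Real.exp_pos _
    rw [show -(n*(lx*x)) - n*(|lx| * δ) = -(n*(lx*x) + n*(|lx| * δ)) by ring, Real.exp_neg,
      ← div_eq_mul_inv, div_le_iff₀ hepos]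
    exact h2.trans (le_of_eq (mul_comm _ _))


lemma final_lemma (x lx M σ : ℝ) (hM : 0 < M) (hσ0 : 0 ≤ σ)
    (p : ℝ → ℕ → ℝ)
    (hub : ∀ δ, 0 < δ → ∀ n : ℕ, 1 ≤ n →
      p δ n ≤ Real.exp (-(n*(lx*x)) + n*(|lx| * δ)) * M^n)
    (hlb : ∀ δ, 0 < δ → ∀ n : ℕ, 1 ≤ n →
      M^n * (1 - σ/(M*n*δ^2)) * Real.exp (-(n*(lx*x)) - n*(|lx| * δ)) ≤ p δ n) :
    Tendsto (fun δ => Filter.liminf (fun n : ℕ => (n:ℝ)⁻¹ * Real.log (p δ n)) atTop) (𝓝[>] 0)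
      (𝓝 (-(x * lx - Real.log M))) := by
  set c : ℝ := x * lx - Real.log M with hc
  -- per δ eventual bounds on u n
  have key : ∀ δ, 0 < δ → ∀ᶠ n : ℕ in atTop,
      ((n:ℝ)⁻¹ * Real.log (p δ n) ≤ -c + |lx| * δ ∧
       -c - |lx| * δ + (n:ℝ)⁻¹ * Real.log (1/2) ≤ (n:ℝ)⁻¹ * Real.log (p δ n)) := by
    intro δ hδ
    have hMδ : 0 < M * δ^2 := by positivity
    filter_upwards [eventually_ge_atTop (max 1 ⌈(2*σ)/(M*δ^2)⌉₊)] with n hn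
    have hn1 : 1 ≤ n := le_trans (le_max_left _ _) hn
    have hnpos : (0:ℝ) < n := by exact_mod_cast hn1
    have hceil : (2*σ)/(M*δ^2) ≤ (n:ℝ) := by
      have := le_trans (le_max_right 1 ⌈(2*σ)/(M*δ^2)⌉₊) hn
      exact le_trans (Nat.le_ceil _) (by exact_mod_cast this)
    have h2σ : 2*σ ≤ M * n * δ^2 := by
      have := (div_le_iff₀ hMδ).1 hceil
      nlinarith
    have hMn : (0:ℝ) < M * n * δ^2 := by positivity
    have hhalf : (1:ℝ)/2 ≤ 1 - σ/(M*n*δ^2) := by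
      have h5 : σ / (M*(n:ℝ)*δ^2) ≤ 1/2 := by
        rw [div_le_div_iff₀ hMn (by norm_num : (0:ℝ) < 2)]
        nlinarith
      linarith
    have hlow : M^n * (1/2) * Real.exp (-(n*(lx*x)) - n*(|lx| * δ)) ≤ p δ n := by
      refine le_trans ?_ (hlb δ hδ n hn1)
      apply mul_le_mul_of_nonneg_right _ (Real.exp_pos _).le
      exact mul_le_mul_of_nonneg_left hhalf (by positivity)
    have hppos : 0 < p δ n := lt_of_lt_of_le (by positivity) hlow
    constructor
    · -- upper
      have hlog : Real.log (p δ n) ≤ -(n*(lx*x)) + n*(|lx| * δ) + n * Real.log M := by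
        calc Real.log (p δ n) ≤ Real.log (Real.exp (-(n*(lx*x)) + n*(|lx| * δ)) * M^n) :=
              Real.log_le_log hppos (hub δ hδ n hn1)
          _ = -(n*(lx*x)) + n*(|lx| * δ) + n * Real.log M := by
              rw [Real.log_mul (Real.exp_ne_zero _) (by positivity), Real.log_exp,
                Real.log_pow]
        
      have := mul_le_mul_of_nonneg_left hlog (inv_nonneg.2 hnpos.le)
      refine le_trans this (le_of_eq ?_)
      field_simp
      ring
    · -- lower
      have hlog : n * Real.log M + Real.log (1/2) + (-(n*(lx*x)) - n*(|lx| * δ))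
          ≤ Real.log (p δ n) := by
        calc (n:ℝ) * Real.log M + Real.log (1/2) + (-(n*(lx*x)) - n*(|lx| * δ))
            = Real.log (M^n * (1/2) * Real.exp (-(n*(lx*x)) - n*(|lx| * δ))) := by
              rw [Real.log_mul (by positivity) (Real.exp_ne_zero _),
                Real.log_mul (by positivity) (by norm_num), Real.log_exp, Real.log_pow]
          _ ≤ Real.log (p δ n) := Real.log_le_log (by positivity) hlow
      have := mul_le_mul_of_nonneg_left hlog (inv_nonneg.2 hnpos.le)
      refine le_trans (le_of_eq ?_) this
      field_simp
      ring
  -- liminf bounds for each δ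
  have hbounds : ∀ δ, 0 < δ →
      (-c - |lx| * δ ≤ Filter.liminf (fun n : ℕ => (n:ℝ)⁻¹ * Real.log (p δ n)) atTop ∧
       Filter.liminf (fun n : ℕ => (n:ℝ)⁻¹ * Real.log (p δ n)) atTop ≤ -c + |lx| * δ) := by
    intro δ hδ
    have hev := key δ hδ
    have hbd_le : IsBoundedUnder (· ≤ ·) atTop (fun n : ℕ => (n:ℝ)⁻¹ * Real.log (p δ n)) :=
      ⟨-c + |lx| * δ, eventually_map.2 (hev.mono fun n hn => hn.1)⟩
    have hbd_ge : IsBoundedUnder (· ≥ ·) atTop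
        (fun n : ℕ => (n:ℝ)⁻¹ * Real.log (p δ n)) := by
      refine ⟨-c - |lx| * δ + Real.log (1/2), eventually_map.2 ?_⟩
      filter_upwards [hev, eventually_ge_atTop 1] with n hn hn1
      have hnpos : (0:ℝ) < n := by exact_mod_cast hn1
      have hlog2 : Real.log (1/2) < 0 := by
        rw [show (1:ℝ)/2 = 2⁻¹ by norm_num, Real.log_inv]
        simp [Real.log_pos (by norm_num : (1:ℝ) < 2)]
      have hinv : (n:ℝ)⁻¹ ≤ 1 := by
        rw [inv_le_one_iff₀]; right; exact_mod_cast hn1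
      have : Real.log (1/2) ≤ (n:ℝ)⁻¹ * Real.log (1/2) := by nlinarith [inv_nonneg.2 hnpos.le]
      have h6 := hn.2
      simp only [ge_iff_le]
      linarith
    constructor
    · -- lower bound on liminf
      apply le_of_forall_pos_le_add
      intro ε hε
      have hev2 : ∀ᶠ n : ℕ in atTop, -ε < (n:ℝ)⁻¹ * Real.log (1/2) := by
        have h0 : Tendsto (fun n : ℕ => (n:ℝ)⁻¹ * Real.log (1/2)) atTop (𝓝 0) := by
          simpa using tendsto_inv_atTop_nhds_zero_nat.mul_const (Real.log (1/2))
        exact h0.eventually (eventually_gt_nhds (by linarith))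
      have : -c - |lx| * δ - ε ≤
          liminf (fun n : ℕ => (n:ℝ)⁻¹ * Real.log (p δ n)) atTop := by
        apply le_liminf_of_le hbd_le.isCoboundedUnder_ge
        filter_upwards [hev, hev2] with n hn hn2
        linarith [hn.2]
      linarith
    · -- upper bound on liminf
      apply liminf_le_of_le hbd_ge
      intro b hb
      obtain ⟨n, hn1, hn2⟩ := (hb.and hev).exists
      linarith [hn2.1]
  -- squeeze
  have hg : Tendsto (fun δ : ℝ => -c - |lx| * δ) (𝓝[>] 0) (𝓝 (-c)) := by
    have : Tendsto (fun δ : ℝ => -c - |lx| * δ) (𝓝 0) (𝓝 (-c - |lx| * 0)) :=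
      (tendsto_const_nhds.sub (tendsto_const_nhds.mul tendsto_id))
    simp only [mul_zero, sub_zero] at this
    exact this.mono_left nhdsWithin_le_nhds
  have hh : Tendsto (fun δ : ℝ => -c + |lx| * δ) (𝓝[>] 0) (𝓝 (-c)) := by
    have : Tendsto (fun δ : ℝ => -c + |lx| * δ) (𝓝 0) (𝓝 (-c + |lx| * 0)) :=
      (tendsto_const_nhds.add (tendsto_const_nhds.mul tendsto_id))
    simp only [mul_zero, add_zero] at this
    exact this.mono_left nhdsWithin_le_nhds
  refine tendsto_of_tendsto_of_tendsto_of_le_of_le' hg hh ?_ ?_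
  · filter_upwards [self_mem_nhdsWithin] with δ (hδ : δ ∈ Set.Ioi (0:ℝ))
    exact (hbounds δ hδ).1
  · filter_upwards [self_mem_nhdsWithin] with δ (hδ : δ ∈ Set.Ioi (0:ℝ))
    exact (hbounds δ hδ).2

lemma transfer_lemma {Ω : Type*} [MeasurableSpace Ω] {P : Measure Ω} {ξ : Ω → ℝ}
    (hξ : Measurable ξ) {X : Ω → ℝ} (hXm : Measurable X) (hid : P.map X = P.map ξ)
    (ψ : ℝ → ℝ) (hψ : Measurable ψ) (hI : Integrable (fun ω => ψ (ξ ω)) P) :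
    Integrable (fun ω => ψ (X ω)) P ∧ ∫ ω, ψ (X ω) ∂P = ∫ ω, ψ (ξ ω) ∂P := by
  have h1 : Integrable ψ (P.map X) := by
    rw [hid, integrable_map_measure hψ.aestronglyMeasurable hξ.aemeasurable]
    exact hI
  constructor
  · rwa [integrable_map_measure hψ.aestronglyMeasurable hXm.aemeasurable] at h1
  · rw [← integral_map hXm.aemeasurable hψ.aestronglyMeasurable, hid,
      integral_map hξ.aemeasurable hψ.aestronglyMeasurable]

/-- Cramér lower bound via tilting: let `ξ` be a real random variable with everywhere
finite cumulant generating function `Λ(λ) = log E[e^{λξ}]` whose law charges every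
nonempty open set (support is all of `ℝ`), let `X_i` be iid copies of `ξ`, and for
`x ∈ ℝ` let `λ_x` satisfy `Λ'(λ_x) = x`, `I(x) = xλ_x - Λ(λ_x)`.  Then
`lim_{δ→0⁺} liminf_n (1/n) log P(S_n/n ∈ (x-δ,x+δ)) = -I(x)`. -/
theorem cramer_lower_bound_tilting
    {Ω : Type*} [MeasurableSpace Ω] (P : Measure Ω) [IsProbabilityMeasure P]
    (ξ : Ω → ℝ) (hξ : Measurable ξ)
    (X : ℕ → Ω → ℝ) (hX : ∀ i, Measurable (X i))
    (hindep : iIndepFun X P)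
    (hident : ∀ i, P.map (X i) = P.map ξ)
    (hint : ∀ l : ℝ, Integrable (fun ω => Real.exp (l * ξ ω)) P)
    (hsupp : ∀ s : Set ℝ, IsOpen s → s.Nonempty → 0 < P.map ξ s)
    (x lx : ℝ)
    (hlx : HasDerivAt (fun l : ℝ => Real.log (∫ ω, Real.exp (l * ξ ω) ∂P)) x lx) :
    Tendsto
      (fun δ : ℝ =>
        Filter.liminf
          (fun n : ℕ => (n : ℝ)⁻¹ *
            Real.log
              ((P {ω | (∑ i ∈ Finset.range n, X i ω) / n ∈ Set.Ioo (x - δ) (x + δ)}).toReal))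
          atTop)
      (𝓝[>] (0:ℝ))
      (𝓝 (-(x * lx - Real.log (∫ ω, Real.exp (lx * ξ ω) ∂P)))) := by
  have hM : 0 < ∫ ω, Real.exp (lx * ξ ω) ∂P := by
    simpa [mgf] using mgf_pos (X := ξ) (μ := P) (t := lx) (hint lx)
  have hD := deriv_step P ξ hξ hint x lx hlx
  set M : ℝ := ∫ ω, Real.exp (lx * ξ ω) ∂P with hMdef
  -- integrability of the tilted first and second moment functions of ξ
  have hhξ : Integrable (fun ω => (ξ ω - x) * Real.exp (lx * ξ ω)) P := by
    refine Integrable.mono (g := fun ω =>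
        Real.exp ((lx+1) * ξ ω) + Real.exp ((lx-1) * ξ ω) + |x| * Real.exp (lx * ξ ω))
      (((hint (lx+1)).add (hint (lx-1))).add ((hint lx).const_mul |x|))
      (((hξ.sub measurable_const).mul ((hξ.const_mul lx).exp)).aestronglyMeasurable)
      (Eventually.of_forall fun ω => ?_)
    rw [Real.norm_eq_abs, Real.norm_eq_abs]
    exact le_trans (bnd3 x lx (ξ ω)) (le_abs_self _)
  have hqξ : Integrable (fun ω => (ξ ω - x)^2 * Real.exp (lx * ξ ω)) P := by
    refine Integrable.mono (g := fun ω =>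
        2*Real.exp ((lx+2) * ξ ω) + 2*Real.exp ((lx-2) * ξ ω) + 2*x^2 * Real.exp (lx * ξ ω))
      ((((hint (lx+2)).const_mul 2).add ((hint (lx-2)).const_mul 2)).add
        ((hint lx).const_mul (2*x^2)))
      ((((hξ.sub measurable_const).pow_const 2).mul ((hξ.const_mul lx).exp)).aestronglyMeasurable)
      (Eventually.of_forall fun ω => ?_)
    rw [Real.norm_eq_abs, Real.norm_eq_abs,
      abs_of_nonneg (mul_nonneg (sq_nonneg _) (Real.exp_pos _).le)]
    refine le_trans (bnd2 x lx (ξ ω)) (le_abs_self _)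
  -- the tilted mean is x
  have hIξe : Integrable (fun ω => Real.exp (lx * ξ ω) * ξ ω) P := by
    have heq : (fun ω => Real.exp (lx * ξ ω) * ξ ω) =
        fun ω => (ξ ω - x) * Real.exp (lx * ξ ω) + x * Real.exp (lx * ξ ω) := by
      funext ω; ring
    rw [heq]; exact hhξ.add ((hint lx).const_mul x)
  have hmean : ∫ ω, (ξ ω - x) * Real.exp (lx * ξ ω) ∂P = 0 := by
    have heq : (fun ω => (ξ ω - x) * Real.exp (lx * ξ ω)) =
        fun ω => Real.exp (lx * ξ ω) * ξ ω - x * Real.exp (lx * ξ ω) := by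
      funext ω; ring
    rw [heq, integral_sub hIξe ((hint lx).const_mul x), hD, integral_const_mul, ← hMdef]
    ring
  -- the tilted variance
  set σ : ℝ := ∫ ω, (ξ ω - x)^2 * Real.exp (lx * ξ ω) ∂P with hσdef
  have hσ0 : 0 ≤ σ :=
    integral_nonneg fun ω => mul_nonneg (sq_nonneg _) (Real.exp_pos _).le
  -- transfer everything to the X i
  have mg : Measurable fun y : ℝ => Real.exp (lx * y) := (measurable_id.const_mul lx).exp
  have mh : Measurable fun y : ℝ => (y - x) * Real.exp (lx * y) :=
    (measurable_id.sub measurable_const).mul mg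
  have mq : Measurable fun y : ℝ => (y - x)^2 * Real.exp (lx * y) :=
    ((measurable_id.sub measurable_const).pow_const 2).mul mg
  have tg := fun i => transfer_lemma hξ (hX i) (hident i) (fun y => Real.exp (lx * y)) mg (hint lx)
  have th := fun i => transfer_lemma hξ (hX i) (hident i)
    (fun y => (y - x) * Real.exp (lx * y)) mh hhξ
  have tq := fun i => transfer_lemma hξ (hX i) (hident i)
    (fun y => (y - x)^2 * Real.exp (lx * y)) mq hqξ
  have moments := tilt_moments P X hX hindep x lx M σ
    (fun i => (tg i).1) (fun i => (th i).1) (fun i => (tq i).1)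
    (fun i => (tg i).2) (fun i => by rw [(th i).2]; exact hmean) (fun i => (tq i).2) hM
  exact final_lemma x lx M σ hM hσ0
    (fun δ n => (P {ω | (∑ i ∈ Finset.range n, X i ω) / n ∈ Set.Ioo (x - δ) (x + δ)}).toReal)
    (fun δ hδ n hn => (bounds_lemma P X hX x lx M σ δ hM hδ hσ0 n hn
      (moments n).1 (moments n).2.2.1 (moments n).2.2.2.1 (moments n).2.2.2.2.2).1)
    (fun δ hδ n hn => (bounds_lemma P X hX x lx M σ δ hM hδ hσ0 n hn
      (moments n).1 (moments n).2.2.1 (moments n).2.2.2.1 (moments n).2.2.2.2.2).2)
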